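/- arXiv:1010.5341 — 3 statements merged into one kernel-verified Lean document; each statement's English description precedes it below -/
import Mathlib

section
/- Let n ≥ 1 and let f(X) = a_0X^n + a_1X^{n-1} + ⋯ + a_n ∈ ℂ[X] with a_0 ≠ 0. Then every root z ∈ ℂ of f(z) = 0 satisfies |z| ≤ (2^{1/n} − 1)^{-1} · max_{1 ≤ k ≤ n} |a_k / (a_0 · binom(n,k))|^{1/k}. -/
/-- Root bound: every complex root `z` of `a₀Xⁿ + a₁X^(n-1) + ⋯ + aₙ` (with `a₀ ≠ 0`) satisfies
`|z| ≤ (2^(1/n) - 1)⁻¹ · max_{1 ≤ k ≤ n} |aₖ/(a₀·binom(n,k))|^(1/k)`. -/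
theorem root_bound (n : ℕ) (hn : 1 ≤ n) (a : ℕ → ℂ) (ha : a 0 ≠ 0) (z : ℂ)
    (hz : ∑ k ∈ Finset.range (n + 1), a k * z ^ (n - k) = 0) :
    ‖z‖ ≤ ((2 : ℝ) ^ ((n : ℝ)⁻¹) - 1)⁻¹ *
      (Finset.Icc 1 n).sup' (Finset.nonempty_Icc.mpr hn)
        (fun k => (‖a k / (a 0 * (n.choose k : ℂ))‖) ^ ((k : ℝ)⁻¹)) := by
  by_contra hlt
  push_neg at hlt
  set M := (Finset.Icc 1 n).sup' (Finset.nonempty_Icc.mpr hn)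
      (fun k => (‖a k / (a 0 * (n.choose k : ℂ))‖) ^ ((k : ℝ)⁻¹)) with hMdef
  have hnne : n ≠ 0 := by omega
  have hn0 : (n : ℝ) ≠ 0 := Nat.cast_ne_zero.mpr hnne
  have hc : 0 < (2 : ℝ) ^ ((n : ℝ)⁻¹) - 1 := by
    have h1 : (1 : ℝ) < 2 ^ ((n : ℝ)⁻¹) :=
      (Real.one_lt_rpow_iff_of_pos (by norm_num)).mpr
        (Or.inl ⟨by norm_num, by positivity⟩)
    linarith
  have hM0 : 0 ≤ M := by
    have h1 : (‖a 1 / (a 0 * (n.choose 1 : ℂ))‖) ^ (((1 : ℕ) : ℝ))⁻¹ ≤ M := by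
      rw [hMdef]
      exact Finset.le_sup' (fun k => (‖a k / (a 0 * (n.choose k : ℂ))‖) ^ ((k : ℝ))⁻¹)
        (Finset.mem_Icc.mpr ⟨le_refl 1, hn⟩)
    have h2 := Real.rpow_nonneg
      (norm_nonneg (a 1 / (a 0 * (n.choose 1 : ℂ)))) (((1 : ℕ) : ℝ))⁻¹
    linarith
  have hzpos : 0 < ‖z‖ := lt_of_le_of_lt (by positivity) hlt
  have hMlt : M < ((2 : ℝ) ^ ((n : ℝ)⁻¹) - 1) * ‖z‖ := by
    have := (mul_lt_mul_iff_right₀ hc).mpr hlt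
    rwa [mul_inv_cancel_left₀ hc.ne'] at this
  -- per-coefficient bound
  have hbound : ∀ k ∈ Finset.Icc 1 n,
      ‖a k‖ ≤ ‖a 0‖ * (n.choose k : ℝ) * M ^ k := by
    intro k hk
    obtain ⟨hk1, hkn⟩ := Finset.mem_Icc.mp hk
    have hCpos : (0 : ℝ) < (n.choose k : ℝ) := by exact_mod_cast Nat.choose_pos hkn
    have hCne : ((n.choose k : ℂ)) ≠ 0 := by
      exact_mod_cast Nat.cast_ne_zero.mpr (Nat.choose_pos hkn).ne'
    have hFk : (‖a k / (a 0 * (n.choose k : ℂ))‖) ^ ((k : ℝ))⁻¹ ≤ M := by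
      rw [hMdef]
      exact Finset.le_sup' (fun k => (‖a k / (a 0 * (n.choose k : ℂ))‖) ^ ((k : ℝ))⁻¹) hk
    have hb : ‖a k / (a 0 * (n.choose k : ℂ))‖ ≤ M ^ k := by
      have h := pow_le_pow_left₀ (Real.rpow_nonneg (norm_nonneg _) _) hFk k
      rwa [Real.rpow_inv_natCast_pow (norm_nonneg _) (by omega)] at h
    have heq : ‖a k‖ = ‖a 0‖ * (n.choose k : ℝ) *
        ‖a k / (a 0 * (n.choose k : ℂ))‖ := by
      rw [norm_div, norm_mul, Complex.norm_natCast]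
      have h0 : ‖a 0‖ ≠ 0 := norm_ne_zero_iff.mpr ha
      field_simp
    rw [heq]
    exact mul_le_mul_of_nonneg_left hb (by positivity)
  -- rearrange the root equation
  rw [Finset.sum_range_succ'] at hz
  simp only [Nat.sub_zero] at hz
  have h1 : a 0 * z ^ n = -∑ k ∈ Finset.range n, a (k + 1) * z ^ (n - (k + 1)) :=
    eq_neg_of_add_eq_zero_right hz
  have habs : ‖a 0‖ * ‖z‖ ^ n ≤
      ∑ k ∈ Finset.range n, ‖a 0‖ * (n.choose (k + 1) : ℝ) * M ^ (k + 1) *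
        ‖z‖ ^ (n - (k + 1)) := by
    calc ‖a 0‖ * ‖z‖ ^ n
        = ‖a 0 * z ^ n‖ := by rw [norm_mul, norm_pow]
      _ = ‖∑ k ∈ Finset.range n, a (k + 1) * z ^ (n - (k + 1))‖ := by
          rw [h1, norm_neg]
      _ ≤ ∑ k ∈ Finset.range n, ‖a (k + 1) * z ^ (n - (k + 1))‖ :=
          norm_sum_le _ _
      _ ≤ ∑ k ∈ Finset.range n, ‖a 0‖ * (n.choose (k + 1) : ℝ) * M ^ (k + 1) *
            ‖z‖ ^ (n - (k + 1)) := by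
          apply Finset.sum_le_sum
          intro k hk
          rw [norm_mul, norm_pow]
          apply mul_le_mul_of_nonneg_right _ (by positivity)
          exact hbound (k + 1) (Finset.mem_Icc.mpr ⟨by omega, by
            have := Finset.mem_range.mp hk; omega⟩)
  -- binomial identity
  have hbin : ∑ k ∈ Finset.range n, (n.choose (k + 1) : ℝ) * M ^ (k + 1) *
      ‖z‖ ^ (n - (k + 1))
      = (M + ‖z‖) ^ n - ‖z‖ ^ n := by
    have h := add_pow M (‖z‖) n
    rw [Finset.sum_range_succ'] at h
    simp only [pow_zero, Nat.sub_zero, Nat.choose_zero_right, Nat.cast_one, one_mul,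
      mul_one] at h
    rw [eq_sub_iff_add_eq, h]
    congr 1
    apply Finset.sum_congr rfl
    intro k _
    ring
  have hsum : ∑ k ∈ Finset.range n, ‖a 0‖ * (n.choose (k + 1) : ℝ) * M ^ (k + 1) *
      ‖z‖ ^ (n - (k + 1)) =
      ‖a 0‖ * ((M + ‖z‖) ^ n - ‖z‖ ^ n) := by
    rw [← hbin, Finset.mul_sum]
    apply Finset.sum_congr rfl
    intro k _
    ring
  -- strict bound
  have hstrict : (M + ‖z‖) ^ n < 2 * ‖z‖ ^ n := by
    have ha1 : M + ‖z‖ < (2 : ℝ) ^ ((n : ℝ)⁻¹) * ‖z‖ := by nlinarith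
    have ha2 : (M + ‖z‖) ^ n < ((2 : ℝ) ^ ((n : ℝ)⁻¹) * ‖z‖) ^ n :=
      pow_lt_pow_left₀ ha1 (by positivity) hnne
    have ha3 : ((2 : ℝ) ^ ((n : ℝ)⁻¹) * ‖z‖) ^ n = 2 * ‖z‖ ^ n := by
      rw [mul_pow, Real.rpow_inv_natCast_pow (by norm_num) hnne]
    rwa [ha3] at ha2
  have ha0 : 0 < ‖a 0‖ := norm_pos_iff.mpr ha
  have hfinal : ‖a 0‖ * ‖z‖ ^ n <
      ‖a 0‖ * ‖z‖ ^ n := by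
    calc ‖a 0‖ * ‖z‖ ^ n
        ≤ ‖a 0‖ * ((M + ‖z‖) ^ n - ‖z‖ ^ n) := by
          rw [← hsum]; exact habs
      _ < ‖a 0‖ * (2 * ‖z‖ ^ n - ‖z‖ ^ n) := by
          apply mul_lt_mul_of_pos_left _ ha0
          linarith
      _ = ‖a 0‖ * ‖z‖ ^ n := by ring
  exact lt_irrefl _ hfinal
end

section
/- Let n be a positive integer and G a subgroup of the symmetric group S_n. Then there exists a polynomial Φ ∈ ℤ[z, a_1, …, a_n] with the following two properties. (i) For every monic polynomial f(X) = X^n + a_1X^{n-1} + ⋯ + a_n ∈ ℤ[X] with complex roots α_1, …, α_n listed with multiplicity, the evaluation of Φ at (z, a_1, …, a_n) equals ∏_σ ( z − Σ_{τ ∈ G} α_{σ(τ(1))} · α_{σ(τ(2))}² ⋯ α_{σ(τ(n))}^n ), where σ runs over a set of representatives of the left cosets of G in S_n (this product is independent of the choice of representatives and of the labelling of the roots). (ii) If moreover f is separable and has Galois group G, then the polynomial z ↦ Φ(z, a_1, …, a_n) has an integer root z. -/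
open Polynomial

/-- A monic separable polynomial `f ∈ ℚ[X]` of degree `n` *has Galois group `G`*, for `G` a
subgroup of the symmetric group on `n` letters, if there is a labelling of the `n` distinct
roots of `f` in its splitting field by `Fin n` such that the subgroup `G` consists exactly of
those permutations of `Fin n` that are induced by elements of the Galois group of the splitting
field of `f` over `ℚ` acting naturally on the roots. -/
def HasGaloisGroup (n : ℕ) (f : Polynomial ℚ) (G : Subgroup (Equiv.Perm (Fin n))) : Prop :=
  ∃ e : Fin n ≃ (f.rootSet f.SplittingField),
    ∀ σ : Equiv.Perm (Fin n), σ ∈ G ↔ ∃ g : f.Gal, ∀ i : Fin n, g • (e i) = e (σ i)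

namespace GalResolvent


variable {n : ℕ} (G : Subgroup (Equiv.Perm (Fin n)))

noncomputable instance : Fintype G := Fintype.ofFinite G
noncomputable instance : Fintype (Equiv.Perm (Fin n) ⧸ G) := Fintype.ofFinite _

/-- generic resolvent invariant attached to a permutation -/
noncomputable def resTerm (σ : Equiv.Perm (Fin n)) : MvPolynomial (Fin n) ℤ :=
  ∑ τ : G, ∏ i : Fin n, MvPolynomial.X (σ ((τ : Equiv.Perm (Fin n)) i)) ^ ((i : ℕ) + 1)

lemma resTerm_mul_mem (σ : Equiv.Perm (Fin n)) {g : Equiv.Perm (Fin n)} (hg : g ∈ G) :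
    resTerm G (σ * g) = resTerm G σ := by
  unfold resTerm
  refine Fintype.sum_equiv (Equiv.mulLeft (⟨g, hg⟩ : G)) _ _ (fun τ => ?_)
  refine Finset.prod_congr rfl (fun i _ => ?_)
  congr 1

lemma resTerm_eq_of_mk_eq {σ σ' : Equiv.Perm (Fin n)}
    (h : (σ : Equiv.Perm (Fin n) ⧸ G) = σ') : resTerm G σ = resTerm G σ' := by
  have hm : σ⁻¹ * σ' ∈ G := QuotientGroup.eq.mp h
  have h2 : σ' = σ * (σ⁻¹ * σ') := by group
  rw [h2, resTerm_mul_mem G σ hm]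

lemma rename_resTerm (π σ : Equiv.Perm (Fin n)) :
    MvPolynomial.rename π (resTerm G σ) = resTerm G (π * σ) := by
  unfold resTerm
  rw [map_sum]
  refine Finset.sum_congr rfl fun τ _ => ?_
  rw [map_prod]
  simp [Equiv.Perm.mul_apply]

/-- the value attached to a coset -/
noncomputable def resAt (c : Equiv.Perm (Fin n) ⧸ G) : MvPolynomial (Fin n) ℤ :=
  resTerm G c.out

lemma resAt_mk (σ : Equiv.Perm (Fin n)) :
    resAt G (σ : Equiv.Perm (Fin n) ⧸ G) = resTerm G σ :=
  resTerm_eq_of_mk_eq G (by rw [QuotientGroup.out_eq'])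

/-- the generic resolvent polynomial, in `z` over the generic roots -/
noncomputable def resPoly : Polynomial (MvPolynomial (Fin n) ℤ) :=
  ∏ c : Equiv.Perm (Fin n) ⧸ G, (X - C (resAt G c))

lemma resPoly_symm (π : Equiv.Perm (Fin n)) :
    (resPoly G).map (MvPolynomial.rename π).toRingHom = resPoly G := by
  unfold resPoly
  rw [Polynomial.map_prod]
  refine Fintype.prod_equiv (MulAction.toPerm π) _ _ fun c => ?_
  rw [Polynomial.map_sub, Polynomial.map_X, Polynomial.map_C]
  congr 2
  show (MvPolynomial.rename π) (resAt G c) = resAt G (π • c)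
  conv_lhs => rw [resAt, rename_resTerm]
  have : (π • c) = ((π * c.out : Equiv.Perm (Fin n)) : Equiv.Perm (Fin n) ⧸ G) := by
    conv_lhs => rw [← QuotientGroup.out_eq' c]
    rfl
  rw [this, resAt_mk]

lemma resPoly_coeff_symm (k : ℕ) : ((resPoly G).coeff k).IsSymmetric := by
  intro π
  have h := resPoly_symm G π
  calc (MvPolynomial.rename π) ((resPoly G).coeff k)
      = ((resPoly G).map (MvPolynomial.rename π).toRingHom).coeff k := by
        rw [Polynomial.coeff_map]; rfl
    _ = (resPoly G).coeff k := by rw [h]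

lemma resPoly_natDegree :
    (resPoly G).natDegree = Fintype.card (Equiv.Perm (Fin n) ⧸ G) := by
  rw [resPoly, natDegree_prod_of_monic _ _ fun c _ => monic_X_sub_C _]
  simp

/-- preimages of the coefficients of `resPoly` under the elementary symmetric substitution -/
noncomputable def coeffPre (k : ℕ) : MvPolynomial (Fin n) ℤ :=
  (MvPolynomial.esymmAlgHom_surjective (σ := Fin n) (R := ℤ) (n := n)
    (by simp) ⟨(resPoly G).coeff k, resPoly_coeff_symm G k⟩).choose

lemma aeval_esymm_coeffPre (k : ℕ) :
    MvPolynomial.aeval (fun i : Fin n => MvPolynomial.esymm (Fin n) ℤ ((i : ℕ) + 1))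
      (coeffPre G k) = (resPoly G).coeff k := by
  have h := (MvPolynomial.esymmAlgHom_surjective (σ := Fin n) (R := ℤ) (n := n)
    (by simp) ⟨(resPoly G).coeff k, resPoly_coeff_symm G k⟩).choose_spec
  have h2 := congrArg Subtype.val h
  rw [MvPolynomial.esymmAlgHom_apply] at h2
  exact h2

/-- the Galois resolvent polynomial -/
noncomputable def Phi : MvPolynomial (Fin (n + 1)) ℤ :=
  ∑ k ∈ Finset.range (Fintype.card (Equiv.Perm (Fin n) ⧸ G) + 1),
    MvPolynomial.aeval (fun i : Fin n => (-1) ^ ((i : ℕ) + 1) * MvPolynomial.X i.succ)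
      (coeffPre G k) * MvPolynomial.X (0 : Fin (n + 1)) ^ k

lemma aeval_esymm_of_factorization (aC α : Fin n → ℂ)
    (hfa : (X ^ n + ∑ i : Fin n, C (aC i) * X ^ (n - 1 - (i : ℕ)) : ℂ[X])
      = ∏ i : Fin n, (X - C (α i))) (i : Fin n) :
    MvPolynomial.aeval α (MvPolynomial.esymm (Fin n) ℤ ((i : ℕ) + 1))
      = (-1) ^ ((i : ℕ) + 1) * aC i := by
  have hn : 0 < n := i.pos
  have hcard : Multiset.card (Finset.univ.val.map α) = n := by simp
  have hrhs : (∏ j : Fin n, (X - C (α j)) : ℂ[X])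
      = ((Finset.univ.val.map α).map (fun t => X - C t)).prod := by
    rw [Multiset.map_map, Finset.prod_eq_multiset_prod]
    rfl
  have hk : n - 1 - (i : ℕ) ≤ Multiset.card (Finset.univ.val.map α) := by
    rw [hcard]; omega
  have hco := Multiset.prod_X_sub_C_coeff (Finset.univ.val.map α) hk
  rw [← hrhs, ← hfa] at hco
  rw [hcard] at hco
  have hni : n - (n - 1 - (i : ℕ)) = (i : ℕ) + 1 := by omega
  rw [hni] at hco
  have hlhs : ((X ^ n + ∑ j : Fin n, C (aC j) * X ^ (n - 1 - (j : ℕ)) : ℂ[X])).coeff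
      (n - 1 - (i : ℕ)) = aC i := by
    rw [Polynomial.coeff_add, Polynomial.coeff_X_pow, Polynomial.finset_sum_coeff]
    rw [if_neg (by omega : ¬ (n - 1 - (i : ℕ) = n)), zero_add]
    rw [Finset.sum_eq_single i]
    · simp
    · intro j _ hj
      rw [Polynomial.coeff_C_mul, Polynomial.coeff_X_pow, if_neg, mul_zero]
      intro hcon
      exact hj (Fin.ext (by omega))
    · simp
  rw [hlhs] at hco
  rw [MvPolynomial.aeval_esymm_eq_multiset_esymm]
  rw [hco, ← mul_assoc, ← pow_add, Even.neg_one_pow ⟨(i : ℕ) + 1, rfl⟩, one_mul]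

lemma eval_Phi (aC α : Fin n → ℂ)
    (hfa : (X ^ n + ∑ i : Fin n, C (aC i) * X ^ (n - 1 - (i : ℕ)) : ℂ[X])
      = ∏ i : Fin n, (X - C (α i))) (z : ℂ) :
    MvPolynomial.eval (Fin.cons z aC) (MvPolynomial.map (Int.castRingHom ℂ) (Phi G)) =
      ∏ c : Equiv.Perm (Fin n) ⧸ G, (z - MvPolynomial.aeval α (resAt G c)) := by
  have hesymm := aeval_esymm_of_factorization aC α hfa
  have key : ∀ p : MvPolynomial (Fin n) ℤ,
      MvPolynomial.eval (Fin.cons z aC) (MvPolynomial.map (Int.castRingHom ℂ)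
        (MvPolynomial.aeval
          (fun i : Fin n => (-1) ^ ((i : ℕ) + 1) * MvPolynomial.X i.succ) p))
      = MvPolynomial.aeval α (MvPolynomial.aeval
          (fun i : Fin n => MvPolynomial.esymm (Fin n) ℤ ((i : ℕ) + 1)) p) := by
    intro p
    let f1 : MvPolynomial (Fin n) ℤ →+* ℂ :=
      (MvPolynomial.eval (Fin.cons z aC)).comp
        ((MvPolynomial.map (Int.castRingHom ℂ)).comp
          (MvPolynomial.aeval
            (fun i : Fin n => (-1) ^ ((i : ℕ) + 1) * MvPolynomial.X i.succ)).toRingHom)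
    let g1 : MvPolynomial (Fin n) ℤ →+* ℂ :=
      (MvPolynomial.aeval α).toRingHom.comp
        (MvPolynomial.aeval
          (fun i : Fin n => MvPolynomial.esymm (Fin n) ℤ ((i : ℕ) + 1))).toRingHom
    have h : f1 = g1 := MvPolynomial.ringHom_ext
      (fun r => by simp [f1, g1]) (fun i => by simp [f1, g1, hesymm i])
    exact RingHom.congr_fun h p
  set N := Fintype.card (Equiv.Perm (Fin n) ⧸ G)
  have hmap : ∀ k, ((resPoly G).map (MvPolynomial.aeval α).toRingHom).coeff k
      = MvPolynomial.aeval α ((resPoly G).coeff k) := fun k => Polynomial.coeff_map _ _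
  calc MvPolynomial.eval (Fin.cons z aC) (MvPolynomial.map (Int.castRingHom ℂ) (Phi G))
      = ∑ k ∈ Finset.range (N + 1),
          MvPolynomial.aeval α ((resPoly G).coeff k) * z ^ k := by
        rw [Phi, map_sum, map_sum]
        refine Finset.sum_congr rfl fun k _ => ?_
        rw [map_mul, map_mul, map_pow, map_pow, key, aeval_esymm_coeffPre]
        congr 2
        rw [MvPolynomial.map_X, MvPolynomial.eval_X, Fin.cons_zero]
    _ = Polynomial.eval z ((resPoly G).map (MvPolynomial.aeval α).toRingHom) := by
        have hdeg : ((resPoly G).map (MvPolynomial.aeval α).toRingHom).natDegree < N + 1 := by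
          have h1 : ((resPoly G).map (MvPolynomial.aeval α).toRingHom).natDegree
              ≤ (resPoly G).natDegree := Polynomial.natDegree_map_le
          have h2 := resPoly_natDegree G
          omega
        rw [Polynomial.eval_eq_sum_range' hdeg]
        exact Finset.sum_congr rfl fun k _ => by rw [hmap]
    _ = ∏ c : Equiv.Perm (Fin n) ⧸ G, (z - MvPolynomial.aeval α (resAt G c)) := by
        rw [resPoly, Polynomial.map_prod, Polynomial.eval_prod]
        refine Finset.prod_congr rfl fun c _ => ?_
        rw [Polynomial.map_sub, Polynomial.map_X, Polynomial.map_C, Polynomial.eval_sub,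
          Polynomial.eval_X, Polynomial.eval_C]
        rfl


lemma part_two (G : Subgroup (Equiv.Perm (Fin n))) (hn : 0 < n) (a : Fin n → ℤ)
    (hsep : (X ^ n + ∑ i : Fin n, C ((a i : ℚ)) * X ^ (n - 1 - (i : ℕ)) : ℚ[X]).Separable)
    (hGal : HasGaloisGroup n (X ^ n + ∑ i : Fin n, C ((a i : ℚ)) * X ^ (n - 1 - (i : ℕ))) G) :
    ∃ z : ℤ, MvPolynomial.eval (Fin.cons z a) (Phi G) = 0 := by
  set f : ℚ[X] := X ^ n + ∑ i : Fin n, C ((a i : ℚ)) * X ^ (n - 1 - (i : ℕ)) with hf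
  obtain ⟨e, he⟩ := hGal
  -- degree facts
  have hdq : (∑ i : Fin n, C ((a i : ℚ)) * X ^ (n - 1 - (i : ℕ)) : ℚ[X]).degree < (n : ℕ) := by
    refine lt_of_le_of_lt (Polynomial.degree_sum_le _ _) ?_
    rw [Finset.sup_lt_iff (by exact_mod_cast WithBot.bot_lt_coe (n : ℕ))]
    intro i _
    refine lt_of_le_of_lt (Polynomial.degree_C_mul_X_pow_le _ _) ?_
    exact_mod_cast (by omega : n - 1 - (i : ℕ) < n)
  have hmonic : f.Monic := Polynomial.monic_X_pow_add hdq
  have hdegf : f.degree = n := by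
    rw [hf]
    rw [Polynomial.degree_add_eq_left_of_degree_lt (by rwa [Polynomial.degree_X_pow]),
      Polynomial.degree_X_pow]
  have hdeg : f.natDegree = n := Polynomial.natDegree_eq_of_degree_eq_some hdegf
  have hfne : f ≠ 0 := hmonic.ne_zero
  -- roots in the splitting field
  set K := f.SplittingField with hK
  set β : Fin n → K := fun i => ((e i : f.rootSet K) : K) with hβ
  have hβinj : Function.Injective β := by
    intro i j hij
    exact e.injective (Subtype.ext hij)
  have hsplits : (f.map (algebraMap ℚ K)).Splits :=
    Polynomial.SplittingField.splits f
  have hmK : (f.map (algebraMap ℚ K)).Monic := hmonic.map _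
  have hcardroots : Multiset.card (f.map (algebraMap ℚ K)).roots = n := by
    rw [Polynomial.splits_iff_card_roots.mp hsplits, Polynomial.natDegree_map, hdeg]
  have hnodup : (f.map (algebraMap ℚ K)).roots.Nodup :=
    Polynomial.nodup_roots (hsep.map (f := algebraMap ℚ K))
  -- the multiset of roots is exactly the images of β
  have hmem : ∀ i, β i ∈ (f.map (algebraMap ℚ K)).roots := by
    intro i
    have h1 : (β i) ∈ f.rootSet K := (e i).2
    rw [Polynomial.mem_rootSet] at h1
    rw [Polynomial.mem_roots hmK.ne_zero, Polynomial.IsRoot.def, Polynomial.eval_map,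
      ← Polynomial.aeval_def]
    exact h1.2
  have hrootsEq : Finset.univ.val.map β = (f.map (algebraMap ℚ K)).roots := by
    refine Multiset.eq_of_le_of_card_le ?_ ?_
    · rw [Multiset.le_iff_subset (Multiset.Nodup.map hβinj Finset.univ.nodup)]
      intro x hx
      obtain ⟨i, _, rfl⟩ := Multiset.mem_map.mp hx
      exact hmem i
    · rw [hcardroots, Multiset.card_map]
      simp
  have hfK : f.map (algebraMap ℚ K) = ∏ i : Fin n, (X - C (β i)) := by
    conv_lhs => rw [hsplits.eq_prod_roots_of_monic hmK]
    rw [← hrootsEq, Multiset.map_map]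
    rw [Finset.prod_eq_multiset_prod]
    rfl
  -- Galois theory
  haveI : IsGalois ℚ K := by
    haveI : IsSplittingField ℚ K f := Polynomial.IsSplittingField.splittingField f
    exact IsGalois.of_separable_splitting_field hsep
  have hgperm : ∀ g : f.Gal, ∃ σ : Equiv.Perm (Fin n), σ ∈ G ∧ ∀ i, g • (e i) = e (σ i) := by
    intro g
    refine ⟨(e.trans (MulAction.toPerm g)).trans e.symm, ?_, ?_⟩
    · exact (he _).mpr ⟨g, fun i => by simp⟩
    · intro i; simp
  have hscoe : ∀ (g : f.Gal) (x : f.rootSet K), ((g • x : f.rootSet K) : K) = g (x : K) :=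
    fun g x => rfl
  set s : K := ∑ τ : G, ∏ i : Fin n, β ((τ : Equiv.Perm (Fin n)) i) ^ ((i : ℕ) + 1) with hs
  have hfix : ∀ g : f.Gal, g s = s := by
    intro g
    obtain ⟨σ, hσG, hσ⟩ := hgperm g
    have hgβ : ∀ j, g (β j) = β (σ j) := by
      intro j
      rw [hβ]
      show g ((e j : f.rootSet K) : K) = _
      rw [← hscoe, hσ j]
    rw [hs, map_sum]
    refine Fintype.sum_equiv (Equiv.mulLeft (⟨σ, hσG⟩ : G)) _ _ fun τ => ?_
    rw [map_prod]
    refine Finset.prod_congr rfl fun i _ => ?_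
    rw [map_pow, hgβ]
    rfl
  have hsbot : s ∈ (⊥ : IntermediateField ℚ K) := by
    have h1 : IntermediateField.fixedField (⊤ : Subgroup (K ≃ₐ[ℚ] K)) = ⊥ := by
      have h2 := IsGalois.fixedField_fixingSubgroup (⊥ : IntermediateField ℚ K)
      rwa [IntermediateField.fixingSubgroup_bot] at h2
    rw [← h1]
    intro g
    exact hfix g.1
  obtain ⟨r, hr⟩ := IntermediateField.mem_bot.mp hsbot
  -- integrality
  set pZ : ℤ[X] := X ^ n + ∑ i : Fin n, C (a i) * X ^ (n - 1 - (i : ℕ)) with hpZ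
  have hdqZ : (∑ i : Fin n, C (a i) * X ^ (n - 1 - (i : ℕ)) : ℤ[X]).degree < (n : ℕ) := by
    refine lt_of_le_of_lt (Polynomial.degree_sum_le _ _) ?_
    rw [Finset.sup_lt_iff (by exact_mod_cast WithBot.bot_lt_coe (n : ℕ))]
    intro i _
    refine lt_of_le_of_lt (Polynomial.degree_C_mul_X_pow_le _ _) ?_
    exact_mod_cast (by omega : n - 1 - (i : ℕ) < n)
  have hpZmonic : pZ.Monic := Polynomial.monic_X_pow_add hdqZ
  have hpZmap : pZ.map (Int.castRingHom ℚ) = f := by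
    rw [hpZ, hf, Polynomial.map_add, Polynomial.map_pow, Polynomial.map_X, Polynomial.map_sum]
    congr 1
    refine Finset.sum_congr rfl fun i _ => ?_
    rw [Polynomial.map_mul, Polynomial.map_C, Polynomial.map_pow, Polynomial.map_X]
    norm_num
  have hint : ∀ i, IsIntegral ℤ (β i) := by
    intro i
    refine ⟨pZ, hpZmonic, ?_⟩
    have h1 : (β i) ∈ f.rootSet K := (e i).2
    rw [Polynomial.mem_rootSet] at h1
    have h2 : pZ.map (algebraMap ℤ K) = f.map (algebraMap ℚ K) := by
      have h0 : (algebraMap ℤ K) = (algebraMap ℚ K).comp (Int.castRingHom ℚ) :=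
        Subsingleton.elim _ _
      rw [h0, ← Polynomial.map_map, hpZmap]
    have h3 : Polynomial.eval₂ (algebraMap ℤ K) (β i) pZ
        = Polynomial.eval (β i) (pZ.map (algebraMap ℤ K)) := (Polynomial.eval_map _ _).symm
    rw [h3, h2, Polynomial.eval_map, ← Polynomial.aeval_def]
    exact h1.2
  have hsint : IsIntegral ℤ s := by
    have h1 : s ∈ integralClosure ℤ K := by
      rw [hs]
      exact Subalgebra.sum_mem _ fun τ _ => Subalgebra.prod_mem _ fun i _ =>
        Subalgebra.pow_mem _ (hint _) _
    exact h1
  have hrint : IsIntegral ℤ r := by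
    have h1 : IsIntegral ℤ (algebraMap ℚ K r) := hr ▸ hsint
    exact (isIntegral_algebraMap_iff (algebraMap ℚ K).injective).mp h1
  obtain ⟨z₀, hz₀⟩ := IsIntegrallyClosed.isIntegral_iff.mp hrint
  -- embedding into ℂ
  haveI : Algebra.IsAlgebraic ℚ K := Algebra.IsAlgebraic.of_finite ℚ K
  set ι : K →ₐ[ℚ] ℂ := IsAlgClosed.lift with hι
  have hcomp : (ι.toRingHom).comp (algebraMap ℚ K) = algebraMap ℚ ℂ := ι.comp_algebraMap
  have h3 := congrArg (Polynomial.map ι.toRingHom) hfK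
  rw [Polynomial.map_map, hcomp] at h3
  have h4 : f.map (algebraMap ℚ ℂ)
      = X ^ n + ∑ i : Fin n, C ((a i : ℂ)) * X ^ (n - 1 - (i : ℕ)) := by
    rw [hf, Polynomial.map_add, Polynomial.map_pow, Polynomial.map_X, Polynomial.map_sum]
    congr 1
    refine Finset.sum_congr rfl fun i _ => ?_
    rw [Polynomial.map_mul, Polynomial.map_C, Polynomial.map_pow, Polynomial.map_X]
    norm_num
  have h5 : (∏ i : Fin n, (X - C (β i))).map ι.toRingHom
      = ∏ i : Fin n, (X - C (ι (β i))) := by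
    rw [Polynomial.map_prod]
    refine Finset.prod_congr rfl fun i _ => ?_
    rw [Polynomial.map_sub, Polynomial.map_X, Polynomial.map_C]
    rfl
  have hfaC : (X ^ n + ∑ i : Fin n, C ((a i : ℂ)) * X ^ (n - 1 - (i : ℕ)) : ℂ[X])
      = ∏ i : Fin n, (X - C (ι (β i))) := by
    rw [← h4, ← h5, h3]
  have hιs : ι s = (z₀ : ℂ) := by
    rw [← hr]
    show ι (algebraMap ℚ K r) = _
    rw [ι.commutes, ← hz₀]
    norm_num
  -- conclude
  refine ⟨z₀, ?_⟩
  have hev := eval_Phi G (fun i => ((a i : ℤ) : ℂ)) (fun i => ι (β i)) hfaC ((z₀ : ℤ) : ℂ)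
  have hcomm : ∀ p : MvPolynomial (Fin n) ℤ,
      MvPolynomial.aeval (fun i => ι (β i)) p = ι (MvPolynomial.aeval β p) := by
    intro p
    let f1 : MvPolynomial (Fin n) ℤ →+* ℂ := (MvPolynomial.aeval (fun i => ι (β i))).toRingHom
    let g1 : MvPolynomial (Fin n) ℤ →+* ℂ := ι.toRingHom.comp (MvPolynomial.aeval β).toRingHom
    have h : f1 = g1 := MvPolynomial.ringHom_ext
      (fun r => by simp [f1, g1]) (fun i => by simp [f1, g1])
    exact RingHom.congr_fun h p
  have hone : MvPolynomial.aeval (fun i => ι (β i))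
      (resAt G ((1 : Equiv.Perm (Fin n)) : Equiv.Perm (Fin n) ⧸ G)) = ((z₀ : ℤ) : ℂ) := by
    rw [resAt_mk, hcomm]
    have h6 : MvPolynomial.aeval β (resTerm G 1) = s := by
      rw [resTerm, hs, map_sum]
      refine Finset.sum_congr rfl fun τ _ => ?_
      rw [map_prod]
      refine Finset.prod_congr rfl fun i _ => ?_
      rw [map_pow, MvPolynomial.aeval_X, Equiv.Perm.one_apply]
    rw [h6, hιs]
  have hzero : MvPolynomial.eval (Fin.cons ((z₀ : ℤ) : ℂ) (fun i => ((a i : ℤ) : ℂ)))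
      (MvPolynomial.map (Int.castRingHom ℂ) (Phi G)) = 0 := by
    rw [hev]
    refine Finset.prod_eq_zero
      (Finset.mem_univ ((1 : Equiv.Perm (Fin n)) : Equiv.Perm (Fin n) ⧸ G)) ?_
    rw [hone, sub_self]
  have hcast : ∀ v : Fin (n + 1) → ℤ,
      MvPolynomial.eval (fun j => ((v j : ℤ) : ℂ))
        (MvPolynomial.map (Int.castRingHom ℂ) (Phi G))
      = ((MvPolynomial.eval v (Phi G) : ℤ) : ℂ) := by
    intro v
    have h7 := MvPolynomial.eval₂_comp_left (Int.castRingHom ℂ) (RingHom.id ℤ) v (Phi G)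
    rw [MvPolynomial.eval₂_id, RingHom.comp_id] at h7
    rw [MvPolynomial.eval_map]
    exact h7.symm
  have hconsc : (fun j => (((Fin.cons z₀ a : Fin (n + 1) → ℤ) j : ℤ) : ℂ))
      = Fin.cons ((z₀ : ℤ) : ℂ) (fun i => ((a i : ℤ) : ℂ)) := by
    funext j
    refine Fin.cases ?_ ?_ j <;> simp
  have h8 := hcast (Fin.cons z₀ a)
  rw [hconsc, hzero] at h8
  exact_mod_cast h8.symm

end GalResolvent

open GalResolvent in
/-- Existence of the Galois resolvent `Φ(z; a₁, …, aₙ)` attached to a subgroup `G ≤ Sₙ`: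
an integer polynomial in `z, a₁, …, aₙ` (the variable `0` of `Fin (n+1)` playing the role of
`z` and the variable `i+1` the role of `a_{i+1}`) such that
(i) whenever `Xⁿ + a₁X^(n-1) + ⋯ + aₙ = ∏ (X - αᵢ)` over `ℂ`, the value `Φ(z; a₁, …, aₙ)`
equals `∏_σ (z - ∑_{τ ∈ G} α_{σ(τ(1))} α_{σ(τ(2))}² ⋯ α_{σ(τ(n))}ⁿ)`, the product running over
any set of representatives `σ` of the left cosets of `G` in `Sₙ`, and
(ii) if the monic integer polynomial `Xⁿ + a₁X^(n-1) + ⋯ + aₙ` is separable and has Galois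
group `G`, then `z ↦ Φ(z; a₁, …, aₙ)` has an integer root. -/
theorem exists_galois_resolvent (n : ℕ) (hn : 0 < n) (G : Subgroup (Equiv.Perm (Fin n))) :
    ∃ Φ : MvPolynomial (Fin (n + 1)) ℤ,
      (∀ rep : (Equiv.Perm (Fin n) ⧸ G) → Equiv.Perm (Fin n),
        (∀ c : Equiv.Perm (Fin n) ⧸ G, QuotientGroup.mk (rep c) = c) →
        ∀ (a : Fin n → ℤ) (α : Fin n → ℂ),
          (X ^ n + ∑ i : Fin n, Polynomial.C ((a i : ℂ)) * X ^ (n - 1 - (i : ℕ)) :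
              Polynomial ℂ) = ∏ i : Fin n, (X - Polynomial.C (α i)) →
          ∀ z : ℂ,
            MvPolynomial.eval (Fin.cons z (fun i => (a i : ℂ)))
                (MvPolynomial.map (Int.castRingHom ℂ) Φ) =
              ∏ᶠ c : Equiv.Perm (Fin n) ⧸ G,
                (z - ∑ᶠ τ : G,
                  ∏ i : Fin n, α (rep c ((τ : Equiv.Perm (Fin n)) i)) ^ ((i : ℕ) + 1))) ∧
      (∀ a : Fin n → ℤ,
        (X ^ n + ∑ i : Fin n, Polynomial.C ((a i : ℚ)) * X ^ (n - 1 - (i : ℕ)) :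
            Polynomial ℚ).Separable →
        HasGaloisGroup n
          (X ^ n + ∑ i : Fin n, Polynomial.C ((a i : ℚ)) * X ^ (n - 1 - (i : ℕ))) G →
        ∃ z : ℤ, MvPolynomial.eval (Fin.cons z a) Φ = 0) := by
  refine ⟨Phi G, fun rep hrep a α hfa z => ?_, fun a hsep hGal => part_two G hn a hsep hGal⟩
  rw [eval_Phi G (fun i => (a i : ℂ)) α hfa z, finprod_eq_prod_of_fintype]
  refine Finset.prod_congr rfl fun c _ => ?_
  rw [finsum_eq_sum_of_fintype]
  congr 1
  have h1 : resAt G c = resTerm G (rep c) := by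
    conv_lhs => rw [← hrep c, resAt_mk]
  rw [h1, resTerm, map_sum]
  refine Finset.sum_congr rfl fun τ _ => ?_
  rw [map_prod]
  refine Finset.prod_congr rfl fun i _ => ?_
  rw [map_pow, MvPolynomial.aeval_X]
end

section
/- Let n and r be coprime positive integers with n > r, and let ε > 0. Then there exists a constant C, depending only on n and ε, such that for every real H ≥ 1 the number of pairs (a_r, a_n) ∈ ℤ² with |a_r| ≤ H, |a_n| ≤ H and such that the trinomial X^n + a_rX^{n-r} + a_n has an integer root is at most C·H^{1+1/n+ε}. -/
lemma aux_root_bound (n r : ℕ) (hr : 0 < r) (hrn : r < n) (K : ℕ) (x a b : ℤ)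
    (ha : |a| ≤ (K:ℤ)) (hb : |b| ≤ (K:ℤ)) (hx : x ^ n + a * x ^ (n - r) + b = 0) :
    |x| ≤ 2 * K := by
  rcases eq_or_ne x 0 with h0 | h0
  · simp [h0]
  have h1 : (1:ℤ) ≤ |x| := Int.one_le_abs (by simpa using h0)
  have hpowpos : (0:ℤ) < |x| ^ (n - r) := pow_pos (by omega) _
  have hpow1 : (1:ℤ) ≤ |x| ^ (n - r) := hpowpos
  have hxn : x ^ n = -b - a * x ^ (n - r) := by linarith
  have habs : |x| ^ n ≤ (K:ℤ) + (K:ℤ) * |x| ^ (n - r) := by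
    calc |x| ^ n = |x ^ n| := (abs_pow x n).symm
    _ = |(-b) - a * x ^ (n-r)| := by rw [hxn]
    _ ≤ |(-b)| + |a * x ^ (n-r)| := abs_sub _ _
    _ = |b| + |a| * |x| ^ (n-r) := by rw [abs_neg, abs_mul, abs_pow]
    _ ≤ (K:ℤ) + (K:ℤ) * |x| ^ (n-r) := by
        have := abs_nonneg (x ^ (n-r))
        nlinarith [abs_pow x (n-r)]
  have hsplit : |x| ^ n = |x| ^ (n - r) * |x| ^ r := by
    rw [← pow_add]; congr 1; omega
  have hxr : |x| ^ r ≤ 2 * K := by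
    have h2 : |x| ^ (n - r) * |x| ^ r ≤ |x| ^ (n - r) * (2 * K) := by
      rw [← hsplit]; nlinarith
    exact le_of_mul_le_mul_left h2 hpowpos
  calc |x| ≤ |x| ^ r := le_self_pow₀ h1 hr.ne'
  _ ≤ 2 * K := hxr

lemma aux_fiber_card (n r : ℕ) (hrn : r < n) (K : ℕ) (x : ℤ) (hx : x ≠ 0) :
    ((Finset.Icc (-(K:ℤ)) (K:ℤ)).filter (fun a => |x ^ n + a * x ^ (n - r)| ≤ (K:ℤ))).card
      ≤ 2 * (K / x.natAbs ^ (n - r)) + 1 := by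
  have hd : 0 < x.natAbs ^ (n - r) := pow_pos (Int.natAbs_pos.mpr hx) _
  set m := K / x.natAbs ^ (n - r) with hm
  have hle := Finset.card_le_card_of_injOn (fun a => x ^ r + a)
    (s := (Finset.Icc (-(K:ℤ)) (K:ℤ)).filter (fun a => |x ^ n + a * x ^ (n - r)| ≤ (K:ℤ)))
    (t := Finset.Icc (-(m:ℤ)) (m:ℤ))
    (fun a hamem => by
      simp only [Finset.mem_coe, Finset.mem_filter, Finset.mem_Icc] at hamem
      obtain ⟨-, hcond⟩ := hamem
      have hfac : x ^ n + a * x ^ (n - r) = x ^ (n - r) * (x ^ r + a) := by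
        have : x ^ n = x ^ (n - r) * x ^ r := by rw [← pow_add]; congr 1; omega
        rw [this]; ring
      rw [hfac, abs_mul, abs_pow] at hcond
      have hnat : (x ^ r + a).natAbs * x.natAbs ^ (n - r) ≤ K := by
        have h' : |x ^ r + a| * |x| ^ (n - r) ≤ (K:ℤ) := by
          nlinarith [abs_nonneg (x ^ r + a), pow_nonneg (abs_nonneg x) (n - r)]
        rw [Int.abs_eq_natAbs, Int.abs_eq_natAbs] at h'
        exact_mod_cast h'
      have hmm : (x ^ r + a).natAbs ≤ m := (Nat.le_div_iff_mul_le hd).mpr hnat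
      have habs' : |x ^ r + a| ≤ (m:ℤ) := by
        rw [Int.abs_eq_natAbs]; exact_mod_cast hmm
      have := abs_le.mp habs'
      simp only [Finset.mem_coe, Finset.mem_Icc]; omega)
    (fun a _ b _ h => by simpa using h)
  calc _ ≤ (Finset.Icc (-(m:ℤ)) (m:ℤ)).card := hle
  _ = 2 * m + 1 := by rw [Int.card_Icc]; omega

/-- Let `n` and `r` be coprime positive integers with `n > r`. Then there are at most
`O_{n,ε}(H^(1+1/n+ε))` pairs `(a_r, a_n)` of integers of absolute value at most `H` such that
the trinomial `X^n + a_r X^(n-r) + a_n` has an integer root. -/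
theorem count_trinomials_with_integer_root (n r : ℕ) (hr : 0 < r) (hrn : r < n)
    (hco : Nat.Coprime n r) (ε : ℝ) (hε : 0 < ε) :
    ∃ C : ℝ, ∀ H : ℝ, 1 ≤ H →
      (Set.ncard {p : ℤ × ℤ |
          (|p.1| : ℝ) ≤ H ∧ (|p.2| : ℝ) ≤ H ∧
          ∃ x : ℤ, x ^ n + p.1 * x ^ (n - r) + p.2 = 0} : ℝ)
        ≤ C * H ^ (1 + 1 / (n : ℝ) + ε) := by
  refine ⟨14 + 4 * 2 ^ ε / ε, fun H hH => ?_⟩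
  have hH0 : (0:ℝ) ≤ H := by linarith
  set K : ℕ := ⌊H⌋₊ with hK
  set N : ℕ := ⌊2 * H⌋₊ with hN
  have hKH : (K:ℝ) ≤ H := Nat.floor_le hH0
  have hNH : (N:ℝ) ≤ 2 * H := Nat.floor_le (by linarith)
  have hN1 : 1 ≤ N := Nat.le_floor (by push_cast; linarith)
  have h2K : 2 * K ≤ N := Nat.le_floor (by push_cast; linarith [Nat.floor_le hH0])
  set φ : ℤ × ℤ → ℤ × ℤ := fun q => (q.2, -(q.1 ^ n + q.2 * q.1 ^ (n - r))) with hφ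
  set T : Finset (ℤ × ℤ) :=
    (Finset.Icc (-(N:ℤ)) (N:ℤ) ×ˢ Finset.Icc (-(K:ℤ)) (K:ℤ)).filter
      (fun q => |q.1 ^ n + q.2 * q.1 ^ (n - r)| ≤ (K:ℤ)) with hT
  have habsK : ∀ z : ℤ, |(z:ℝ)| ≤ H → |z| ≤ (K:ℤ) := by
    intro z hz
    have h2 : z.natAbs ≤ K := Nat.le_floor (by rwa [Nat.cast_natAbs, Int.cast_abs])
    rw [Int.abs_eq_natAbs]
    exact_mod_cast h2
  -- covering
  have hsub : {p : ℤ × ℤ | (|p.1| : ℝ) ≤ H ∧ (|p.2| : ℝ) ≤ H ∧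
      ∃ x : ℤ, x ^ n + p.1 * x ^ (n - r) + p.2 = 0} ⊆ ↑(T.image φ) := by
    rintro ⟨a, b⟩ ⟨h1, h2, x, hx⟩
    have ha : |a| ≤ (K:ℤ) := habsK a (by simpa using h1)
    have hb : |b| ≤ (K:ℤ) := habsK b (by simpa using h2)
    have hxN : |x| ≤ (N:ℤ) :=
      le_trans (aux_root_bound n r hr hrn K x a b ha hb hx) (by exact_mod_cast h2K)
    have hval : x ^ n + a * x ^ (n - r) = -b := by linarith
    simp only [Finset.coe_image, Set.mem_image, Finset.mem_coe]
    refine ⟨(x, a), ?_, ?_⟩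
    · simp only [hT, Finset.mem_filter, Finset.mem_product, Finset.mem_Icc]
      exact ⟨⟨abs_le.mp hxN, abs_le.mp ha⟩, by rw [hval, abs_neg]; exact hb⟩
    · simp only [hφ, Prod.mk.injEq]
      exact ⟨trivial, by linarith⟩
  have hstep1 : (Set.ncard {p : ℤ × ℤ | (|p.1| : ℝ) ≤ H ∧ (|p.2| : ℝ) ≤ H ∧
      ∃ x : ℤ, x ^ n + p.1 * x ^ (n - r) + p.2 = 0}) ≤ T.card := by
    refine le_trans (Set.ncard_le_ncard hsub (Finset.finite_toSet _)) ?_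
    rw [Set.ncard_coe_finset]
    exact Finset.card_image_le
  -- fiberwise decomposition
  have hcard : T.card = ∑ x ∈ Finset.Icc (-(N:ℤ)) (N:ℤ), (T.filter (fun q => q.1 = x)).card :=
    Finset.card_eq_sum_card_fiberwise (fun q hq => by
      simp only [hT, Finset.mem_coe, Finset.mem_filter, Finset.mem_product] at hq
      exact hq.1.1)
  set Gr : ℕ → ℝ := fun k => if k = 0 then 2*(K:ℝ)+1 else 2*(K:ℝ)/k + 1 with hGr
  have hGr0 : ∀ k, 0 ≤ Gr k := by
    intro k; rw [hGr]; dsimp only; split <;> positivity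
  have hfib : ∀ x : ℤ, ((T.filter (fun q => q.1 = x)).card : ℝ) ≤ Gr x.natAbs := by
    intro x
    have hinj : (T.filter (fun q => q.1 = x)).card ≤
        ((Finset.Icc (-(K:ℤ)) (K:ℤ)).filter (fun a => |x ^ n + a * x ^ (n - r)| ≤ (K:ℤ))).card := by
      refine Finset.card_le_card_of_injOn Prod.snd (fun q hq => ?_) (fun q hq q' hq' h => ?_)
      · simp only [hT, Finset.mem_coe, Finset.mem_filter, Finset.mem_product, Finset.mem_Icc] at hq ⊢
        obtain ⟨⟨⟨-, hb⟩, hc⟩, hfst⟩ := hq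
        subst hfst
        exact ⟨hb, hc⟩
      · simp only [Finset.coe_filter, Set.mem_setOf_eq] at hq hq'
        exact Prod.ext (hq.2.trans hq'.2.symm) h
    rcases eq_or_ne x 0 with h0 | h0
    · subst h0
      have : (Finset.filter (fun a => |(0:ℤ) ^ n + a * 0 ^ (n - r)| ≤ (K:ℤ))
          (Finset.Icc (-(K:ℤ)) (K:ℤ))).card ≤ (Finset.Icc (-(K:ℤ)) (K:ℤ)).card :=
        Finset.card_filter_le _ _
      have hcardIcc : (Finset.Icc (-(K:ℤ)) (K:ℤ)).card = 2 * K + 1 := by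
        rw [Int.card_Icc]; omega
      have h' : (T.filter (fun q => q.1 = (0:ℤ))).card ≤ 2 * K + 1 := by
        refine hinj.trans (this.trans_eq hcardIcc)
      rw [hGr]; simp only [Int.natAbs_zero, if_pos rfl]
      exact_mod_cast le_trans (Nat.cast_le.mpr h') (by norm_num)
    · have h1 := aux_fiber_card n r hrn K x h0
      have h2 : K / x.natAbs ^ (n - r) ≤ K / x.natAbs :=
        Nat.div_le_div_left (Nat.le_self_pow (by omega) _) (Int.natAbs_pos.mpr h0)
      have h3 : (T.filter (fun q => q.1 = x)).card ≤ 2 * (K / x.natAbs) + 1 :=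
        hinj.trans (h1.trans (by omega))
      have h4 : ((2 * (K / x.natAbs) + 1 : ℕ) : ℝ) ≤ 2*(K:ℝ)/(x.natAbs:ℝ) + 1 := by
        push_cast
        have hdl := Nat.cast_div_le (α := ℝ) (m := K) (n := x.natAbs)
        have hrw : (2:ℝ) * (K:ℝ) / (x.natAbs:ℝ) = 2 * ((K:ℝ) / (x.natAbs:ℝ)) := by ring
        linarith
      rw [hGr]; dsimp only
      rw [if_neg (by simpa using h0)]
      exact le_trans (Nat.cast_le.mpr h3) h4
  have hsum1 : (T.card : ℝ) ≤ ∑ x ∈ Finset.Icc (-(N:ℤ)) (N:ℤ), Gr x.natAbs := by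
    rw [hcard]
    push_cast
    exact Finset.sum_le_sum (fun x _ => hfib x)
  -- fold to nonneg integers
  have hsum2 : ∑ x ∈ Finset.Icc (-(N:ℤ)) (N:ℤ), Gr x.natAbs
      ≤ 2 * ∑ k ∈ Finset.range (N+1), Gr k := by
    have himg : Finset.Icc (-(N:ℤ)) 0 = (Finset.Icc (0:ℤ) (N:ℤ)).image (fun x => -x) := by
      ext z
      simp only [Finset.mem_Icc, Finset.mem_image]
      constructor
      · intro h; exact ⟨-z, by omega, by omega⟩
      · rintro ⟨w, hw, rfl⟩; omega
    have hneg : ∑ x ∈ Finset.Icc (-(N:ℤ)) 0, Gr x.natAbs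
        = ∑ x ∈ Finset.Icc (0:ℤ) (N:ℤ), Gr x.natAbs := by
      rw [himg, Finset.sum_image (by intro a _ b _ h; exact neg_inj.mp h)]
      exact Finset.sum_congr rfl (fun x _ => by rw [Int.natAbs_neg])
    have hcastimg : Finset.Icc (0:ℤ) (N:ℤ) = (Finset.range (N+1)).image (Nat.cast : ℕ → ℤ) := by
      ext z
      simp only [Finset.mem_Icc, Finset.mem_image, Finset.mem_range]
      constructor
      · rintro ⟨hz0, hzN⟩
        exact ⟨z.toNat, by omega, by omega⟩
      · rintro ⟨k, hk, rfl⟩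
        constructor <;> [positivity; exact_mod_cast by omega]
    have hcast : ∑ x ∈ Finset.Icc (0:ℤ) (N:ℤ), Gr x.natAbs = ∑ k ∈ Finset.range (N+1), Gr k := by
      rw [hcastimg, Finset.sum_image (by intro a _ b _ h; exact_mod_cast h)]
      exact Finset.sum_congr rfl (fun k _ => by rw [Int.natAbs_natCast])
    have hdisj : Disjoint (Finset.Icc (-(N:ℤ)) (-1)) (Finset.Icc 0 (N:ℤ)) := by
      rw [Finset.disjoint_left]
      intro z hz hz'
      simp only [Finset.mem_Icc] at hz hz'
      omega
    have hsplit : Finset.Icc (-(N:ℤ)) (N:ℤ) = Finset.Icc (-(N:ℤ)) (-1) ∪ Finset.Icc 0 (N:ℤ) := by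
      ext z
      simp only [Finset.mem_Icc, Finset.mem_union]
      omega
    calc ∑ x ∈ Finset.Icc (-(N:ℤ)) (N:ℤ), Gr x.natAbs
        = ∑ x ∈ Finset.Icc (-(N:ℤ)) (-1), Gr x.natAbs + ∑ x ∈ Finset.Icc 0 (N:ℤ), Gr x.natAbs := by
          rw [hsplit, Finset.sum_union hdisj]
      _ ≤ ∑ x ∈ Finset.Icc (-(N:ℤ)) 0, Gr x.natAbs + ∑ x ∈ Finset.Icc 0 (N:ℤ), Gr x.natAbs := by
          refine add_le_add (Finset.sum_le_sum_of_subset_of_nonneg ?_ (fun _ _ _ => hGr0 _)) le_rfl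
          intro z hz
          simp only [Finset.mem_Icc] at *
          omega
      _ = 2 * ∑ k ∈ Finset.range (N+1), Gr k := by
          rw [hneg, hcast]; ring
  -- evaluate the range sum
  have hhar : ∑ i ∈ Finset.range N, ((i:ℝ)+1)⁻¹ ≤ 1 + Real.log N := by
    have h1 := harmonic_le_one_add_log N
    have h2 : (harmonic N : ℝ) = ∑ i ∈ Finset.range N, ((i:ℝ)+1)⁻¹ := by
      unfold harmonic; push_cast; rfl
    linarith
  have hsum3 : ∑ k ∈ Finset.range (N+1), Gr k
      ≤ (2*(K:ℝ)+1) + ((N:ℝ) + 2*(K:ℝ)*(1 + Real.log N)) := by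
    rw [Finset.sum_range_succ']
    have hGr0' : Gr 0 = 2*(K:ℝ)+1 := by rw [hGr]; norm_num
    have hGrs : ∀ i : ℕ, Gr (i+1) = 2*(K:ℝ)*((i:ℝ)+1)⁻¹ + 1 := by
      intro i; rw [hGr]; dsimp only
      rw [if_neg (Nat.succ_ne_zero i)]
      push_cast
      ring
    calc (∑ i ∈ Finset.range N, Gr (i+1)) + Gr 0
        = (∑ i ∈ Finset.range N, (2*(K:ℝ)*((i:ℝ)+1)⁻¹ + 1)) + (2*(K:ℝ)+1) := by
          rw [hGr0']; congr 1; exact Finset.sum_congr rfl (fun i _ => hGrs i)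
      _ = 2*(K:ℝ) * (∑ i ∈ Finset.range N, ((i:ℝ)+1)⁻¹) + (N:ℝ) + (2*(K:ℝ)+1) := by
          rw [Finset.sum_add_distrib, Finset.sum_const, Finset.card_range, ← Finset.mul_sum,
            nsmul_eq_mul, mul_one]
      _ ≤ 2*(K:ℝ) * (1 + Real.log N) + (N:ℝ) + (2*(K:ℝ)+1) := by
          have h := mul_le_mul_of_nonneg_left hhar (by positivity : (0:ℝ) ≤ 2*(K:ℝ))
          linarith
      _ = (2*(K:ℝ)+1) + ((N:ℝ) + 2*(K:ℝ)*(1 + Real.log N)) := by ring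
  -- log bound
  have hNpos : (0:ℝ) < (N:ℝ) := by exact_mod_cast hN1
  set X : ℝ := H ^ ε with hX
  have hX0 : (0:ℝ) ≤ X := Real.rpow_nonneg hH0 ε
  have hlog : Real.log N ≤ 2 ^ ε * X / ε := by
    calc Real.log N ≤ Real.log (2*H) := by
          apply Real.log_le_log hNpos hNH
    _ ≤ (2*H) ^ ε / ε := Real.log_le_rpow_div (by linarith) hε
    _ = 2 ^ ε * X / ε := by rw [Real.mul_rpow (by norm_num) hH0]
  have hlogN0 : (0:ℝ) ≤ Real.log N := Real.log_natCast_nonneg N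
  have hHpow : H * X = H ^ ((1:ℝ)+ε) := by
    rw [hX, Real.rpow_add (by linarith : (0:ℝ) < H), Real.rpow_one]
  set L : ℝ := H ^ (1 + 1/(n:ℝ) + ε) with hL
  have hinv0 : (0:ℝ) ≤ 1/(n:ℝ) := by positivity
  have hH1 : H ≤ L := by
    calc H = H ^ (1:ℝ) := (Real.rpow_one H).symm
    _ ≤ L := Real.rpow_le_rpow_of_exponent_le hH (by linarith)
  have hmono2 : H ^ ((1:ℝ)+ε) ≤ L := Real.rpow_le_rpow_of_exponent_le hH (by linarith)
  -- assemble
  have hchain : (T.card : ℝ) ≤ 2 * ((2*(K:ℝ)+1) + ((N:ℝ) + 2*(K:ℝ)*(1 + Real.log N))) := by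
    calc (T.card : ℝ) ≤ ∑ x ∈ Finset.Icc (-(N:ℤ)) (N:ℤ), Gr x.natAbs := hsum1
    _ ≤ 2 * ∑ k ∈ Finset.range (N+1), Gr k := hsum2
    _ ≤ 2 * ((2*(K:ℝ)+1) + ((N:ℝ) + 2*(K:ℝ)*(1 + Real.log N))) := by linarith
  have hprod : 4*(K:ℝ) * Real.log N ≤ 4*H*(2 ^ ε * X / ε) := by
    have hK0 : (0:ℝ) ≤ 4*(K:ℝ) := by positivity
    have h1 : 4*(K:ℝ) ≤ 4*H := by linarith
    exact mul_le_mul h1 hlog hlogN0 (by linarith)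
  have hbig : (T.card : ℝ) ≤ 14*H + (4 * 2 ^ ε / ε) * H ^ ((1:ℝ)+ε) := by
    have heq : 4*H*(2 ^ ε * X / ε) = (4 * 2 ^ ε / ε) * (H * X) := by ring
    rw [heq, hHpow] at hprod
    linarith
  have hfinal : (T.card : ℝ) ≤ (14 + 4 * 2 ^ ε / ε) * L := by
    have hc : (0:ℝ) ≤ 4 * 2 ^ ε / ε := by positivity
    have h1 : (4 * 2 ^ ε / ε) * H ^ ((1:ℝ)+ε) ≤ (4 * 2 ^ ε / ε) * L :=
      mul_le_mul_of_nonneg_left hmono2 hc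
    have h2 : 14*H ≤ 14*L := by linarith
    calc (T.card : ℝ) ≤ 14*H + (4 * 2 ^ ε / ε) * H ^ ((1:ℝ)+ε) := hbig
    _ ≤ 14*L + (4 * 2 ^ ε / ε) * L := by linarith
    _ = (14 + 4 * 2 ^ ε / ε) * L := by ring
  calc ((Set.ncard {p : ℤ × ℤ | (|p.1| : ℝ) ≤ H ∧ (|p.2| : ℝ) ≤ H ∧
      ∃ x : ℤ, x ^ n + p.1 * x ^ (n - r) + p.2 = 0} : ℕ) : ℝ) ≤ (T.card : ℝ) := by
        exact_mod_cast hstep1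
  _ ≤ (14 + 4 * 2 ^ ε / ε) * L := hfinal
end
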